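/- Let T₁, T₂, T₃ ∈ B(H) with 0 ≤ T₁T₁* + T₂T₂* − T₃T₃* ≤ I and T the positive square root. If u = Tx with x ∈ (ker T)^⊥, then for every ε > 0, setting x_ε = E((ε,∞))x, y_ε = (∫_{(ε,∞)} λ^{-1} dE_λ)x_ε, and z_j(ε) = T_j* y_ε (j = 1,2,3), one has: (i) T₁z₁(ε) + T₂z₂(ε) − T₃z₃(ε) = Tx_ε → u in H as ε → 0; (ii) 0 ≤ ‖z₁(ε)‖² + ‖z₂(ε)‖² − ‖z₃(ε)‖² = ‖x_ε‖² and ‖x_ε‖² increases to ‖u‖²_{M(T)} = ‖x‖² as ε ↓ 0. -/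

import Mathlib

set_option synthInstance.maxHeartbeats 800000
set_option maxHeartbeats 1000000

open ContinuousLinearMap Filter

/-- For a positive operator `T`, the spectral subspace of `[0, ε]` is
`{x | ‖Tⁿx‖ ≤ εⁿ‖x‖ for all n}`. -/
def spectralLE {H : Type*} [NormedAddCommGroup H] [InnerProductSpace ℂ H]
    (T : H →L[ℂ] H) (ε : ℝ) : Set H :=
  {x | ∀ n : ℕ, ‖(T ^ n) x‖ ≤ ε ^ n * ‖x‖}

/-- For a positive operator `T`, the range `E((ε,∞))H` of the spectral projection of `T`
for the interval `(ε,∞)` is the orthogonal complement of the spectral subspace of `[0, ε]`. -/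
def spectralGT {H : Type*} [NormedAddCommGroup H] [InnerProductSpace ℂ H]
    (T : H →L[ℂ] H) (ε : ℝ) : Set H :=
  {x | ∀ y ∈ spectralLE T ε, (inner ℂ y x : ℂ) = 0}

open scoped InnerProductSpace

namespace IndefAux

variable {H : Type*} [NormedAddCommGroup H] [InnerProductSpace ℂ H] [CompleteSpace H]

lemma sa_inner {T : H →L[ℂ] H} (hsa : IsSelfAdjoint T) (u v : H) :
    ⟪T u, v⟫_ℂ = ⟪u, T v⟫_ℂ := by
  conv_lhs => rw [← hsa.adjoint_eq]
  exact ContinuousLinearMap.adjoint_inner_left T v u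

lemma pow_succ_apply (T : H →L[ℂ] H) (n : ℕ) (x : H) :
    (T ^ (n + 1)) x = T ((T ^ n) x) := by
  rw [pow_succ']; rfl

lemma logconvex {T : H →L[ℂ] H} (hsa : IsSelfAdjoint T) (x : H) (n : ℕ) :
    ‖(T ^ (n + 1)) x‖ ^ 2 ≤ ‖(T ^ n) x‖ * ‖(T ^ (n + 2)) x‖ := by
  have key : ⟪(T ^ (n+1)) x, (T ^ (n+1)) x⟫_ℂ = ⟪(T ^ n) x, (T ^ (n+2)) x⟫_ℂ := by
    rw [show (T ^ (n+2)) x = T (T ((T ^ n) x)) from by rw [pow_succ_apply, pow_succ_apply],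
      pow_succ_apply]
    exact sa_inner hsa _ _
  have h1 : (‖(T ^ (n+1)) x‖ : ℝ) ^ 2 = RCLike.re ⟪(T ^ n) x, (T ^ (n+2)) x⟫_ℂ := by
    rw [← key, inner_self_eq_norm_sq]
  calc ‖(T ^ (n+1)) x‖ ^ 2 = RCLike.re ⟪(T ^ n) x, (T ^ (n+2)) x⟫_ℂ := h1
    _ ≤ ‖(⟪(T ^ n) x, (T ^ (n+2)) x⟫_ℂ)‖ := RCLike.re_le_norm _
    _ ≤ ‖(T ^ n) x‖ * ‖(T ^ (n+2)) x‖ := norm_inner_le_norm _ _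

lemma step_bound {T : H →L[ℂ] H} (hsa : IsSelfAdjoint T) {x : H} {ε C : ℝ} (hε : 0 < ε)
    (hC : ∀ n, ‖(T ^ n) x‖ ≤ C * ε ^ n) (n : ℕ) :
    ‖(T ^ (n + 1)) x‖ ≤ ε * ‖(T ^ n) x‖ := by
  by_contra hcon
  push_neg at hcon
  have haN : 0 < ‖(T ^ n) x‖ := by
    rcases (norm_nonneg ((T ^ n) x)).lt_or_eq with h | h
    · exact h
    · exfalso
      have h0 : (T ^ n) x = 0 := by rw [← norm_eq_zero, ← h]
      have h1 : ‖(T ^ (n + 1)) x‖ = 0 := by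
        rw [pow_succ_apply, h0, map_zero, norm_zero]
      rw [h1] at hcon
      nlinarith [norm_nonneg ((T ^ n) x)]
  set r : ℝ := ‖(T ^ (n + 1)) x‖ / ‖(T ^ n) x‖ with hrdef
  have hr : ε < r := (lt_div_iff₀ haN).mpr (by simpa [mul_comm] using hcon)
  have hr0 : 0 < r := hε.trans hr
  have hstep : ∀ k, 0 < ‖(T ^ (n + k)) x‖ ∧
      r * ‖(T ^ (n + k)) x‖ ≤ ‖(T ^ (n + k + 1)) x‖ := by
    intro k
    induction k with
    | zero =>
      refine ⟨haN, ?_⟩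
      simp only [Nat.add_zero]
      rw [hrdef, div_mul_cancel₀ _ haN.ne']
    | succ k ih =>
      obtain ⟨hpos, hle⟩ := ih
      have hpos1 : 0 < ‖(T ^ (n + k + 1)) x‖ := lt_of_lt_of_le (mul_pos hr0 hpos) hle
      refine ⟨hpos1, ?_⟩
      have lc := logconvex hsa x (n + k)
      show r * ‖(T ^ (n + k + 1)) x‖ ≤ ‖(T ^ (n + k + 2)) x‖
      nlinarith [lc, hle, hpos, hpos1, hr0]
  have growth : ∀ k, r ^ k * ‖(T ^ n) x‖ ≤ ‖(T ^ (n + k)) x‖ := by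
    intro k
    induction k with
    | zero => simp
    | succ k ih =>
      calc r ^ (k + 1) * ‖(T ^ n) x‖ = r * (r ^ k * ‖(T ^ n) x‖) := by ring
        _ ≤ r * ‖(T ^ (n + k)) x‖ := mul_le_mul_of_nonneg_left ih hr0.le
        _ ≤ ‖(T ^ (n + k + 1)) x‖ := (hstep k).2
  have hC' : ∀ k, r ^ k * ‖(T ^ n) x‖ ≤ C * ε ^ n * ε ^ k := by
    intro k
    calc r ^ k * ‖(T ^ n) x‖ ≤ ‖(T ^ (n + k)) x‖ := growth k
      _ ≤ C * ε ^ (n + k) := hC (n + k)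
      _ = C * ε ^ n * ε ^ k := by rw [pow_add]; ring
  have hrε : 1 < r / ε := (one_lt_div hε).mpr hr
  obtain ⟨k, hk⟩ := pow_unbounded_of_one_lt (C * ε ^ n / ‖(T ^ n) x‖) hrε
  have key : (r / ε) ^ k ≤ C * ε ^ n / ‖(T ^ n) x‖ := by
    rw [div_pow, div_le_div_iff₀ (pow_pos hε k) haN]
    exact hC' k
  exact absurd key (not_le.mpr hk)

lemma mem_spectralLE_of_bounded {T : H →L[ℂ] H} (hsa : IsSelfAdjoint T) {ε : ℝ} (hε : 0 < ε)
    {x : H} {C : ℝ} (hC : ∀ n, ‖(T ^ n) x‖ ≤ C * ε ^ n) : x ∈ spectralLE T ε := by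
  intro n
  induction n with
  | zero => simp
  | succ n ih =>
    calc ‖(T ^ (n + 1)) x‖ ≤ ε * ‖(T ^ n) x‖ := step_bound hsa hε hC n
      _ ≤ ε * (ε ^ n * ‖x‖) := mul_le_mul_of_nonneg_left ih hε.le
      _ = ε ^ (n + 1) * ‖x‖ := by ring

/-- The spectral subspace of `[0, ε]` as a submodule. -/
def specSub (T : H →L[ℂ] H) (ε : ℝ) : Submodule ℂ H where
  carrier := {x | ∃ C, ∀ n, ‖(T ^ n) x‖ ≤ C * ε ^ n}
  add_mem' := by
    rintro a b ⟨C, hC⟩ ⟨D, hD⟩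
    exact ⟨C + D, fun n => by
      calc ‖(T ^ n) (a + b)‖ ≤ ‖(T ^ n) a‖ + ‖(T ^ n) b‖ := by
            rw [map_add]; exact norm_add_le _ _
        _ ≤ C * ε ^ n + D * ε ^ n := add_le_add (hC n) (hD n)
        _ = (C + D) * ε ^ n := by ring⟩
  zero_mem' := ⟨0, fun n => by simp⟩
  smul_mem' := by
    rintro c x ⟨C, hC⟩
    exact ⟨‖c‖ * C, fun n => by
      rw [map_smul, norm_smul, mul_assoc]
      exact mul_le_mul_of_nonneg_left (hC n) (norm_nonneg c)⟩

lemma coe_specSub {T : H →L[ℂ] H} (hsa : IsSelfAdjoint T) {ε : ℝ} (hε : 0 < ε) :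
    (specSub T ε : Set H) = spectralLE T ε := by
  ext x
  constructor
  · rintro ⟨C, hC⟩
    exact mem_spectralLE_of_bounded hsa hε hC
  · intro h
    exact ⟨‖x‖, fun n => by rw [mul_comm]; exact h n⟩

lemma spectralLE_isClosed (T : H →L[ℂ] H) (ε : ℝ) : IsClosed (spectralLE T ε) := by
  have : spectralLE T ε = ⋂ n : ℕ, {x : H | ‖(T ^ n) x‖ ≤ ε ^ n * ‖x‖} := by
    ext x; simp [spectralLE, Set.mem_iInter]
  rw [this]
  exact isClosed_iInter fun n =>
    isClosed_le ((T ^ n).continuous.norm) (continuous_const.mul continuous_norm)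

lemma specSub_isClosed {T : H →L[ℂ] H} (hsa : IsSelfAdjoint T) {ε : ℝ} (hε : 0 < ε) :
    IsClosed ((specSub T ε : Set H)) := by
  rw [coe_specSub hsa hε]; exact spectralLE_isClosed T ε

lemma specSub_Tmem {T : H →L[ℂ] H} {ε : ℝ} {x : H} (hx : x ∈ specSub T ε) :
    T x ∈ specSub T ε := by
  obtain ⟨C, hC⟩ := hx
  refine ⟨C * ε, fun n => ?_⟩
  have h1 : (T ^ n) (T x) = (T ^ (n + 1)) x := by rw [pow_succ]; rfl
  rw [h1]
  calc ‖(T ^ (n + 1)) x‖ ≤ C * ε ^ (n + 1) := hC (n + 1)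
    _ = C * ε * ε ^ n := by ring

lemma orth_Tmem {T : H →L[ℂ] H} (hsa : IsSelfAdjoint T) {ε : ℝ} {z : H}
    (hz : z ∈ (specSub T ε)ᗮ) : T z ∈ (specSub T ε)ᗮ := by
  rw [Submodule.mem_orthogonal] at hz ⊢
  intro u hu
  rw [← sa_inner hsa]
  exact hz (T u) (specSub_Tmem hu)

/-! ### CFC part -/

noncomputable def gfun (δ ε : ℝ) : ℝ → ℝ := fun t => min 1 (max 0 ((ε - δ)⁻¹ * (ε - t)))

lemma gfun_continuous (δ ε : ℝ) : Continuous (gfun δ ε) := by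
  unfold gfun; fun_prop

lemma gfun_nonneg (δ ε t : ℝ) : 0 ≤ gfun δ ε t :=
  le_min zero_le_one (le_max_left _ _)

lemma gfun_le_one (δ ε t : ℝ) : gfun δ ε t ≤ 1 := min_le_left _ _

lemma gfun_eq_one {δ ε t : ℝ} (hδε : δ < ε) (ht : t ≤ δ) : gfun δ ε t = 1 := by
  have h1 : (1 : ℝ) ≤ (ε - δ)⁻¹ * (ε - t) := by
    rw [inv_mul_eq_div, le_div_iff₀ (by linarith)]
    linarith
  unfold gfun
  rw [max_eq_right (by linarith), min_eq_left h1]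

lemma gfun_eq_zero {δ ε t : ℝ} (hδε : δ < ε) (ht : ε ≤ t) : gfun δ ε t = 0 := by
  have h1 : (ε - δ)⁻¹ * (ε - t) ≤ 0 :=
    mul_nonpos_of_nonneg_of_nonpos (inv_nonneg.mpr (by linarith)) (by linarith)
  unfold gfun
  rw [max_eq_left h1, min_eq_right zero_le_one]

variable {T : H →L[ℂ] H}

lemma spec_nonneg (hpos : T.IsPositive) {t : ℝ} (ht : t ∈ spectrum ℝ T) : 0 ≤ t :=
  spectrum_nonneg_of_nonneg ((ContinuousLinearMap.nonneg_iff_isPositive T).mpr hpos) ht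

lemma cfc_g_mem_specSub (hpos : T.IsPositive) {δ ε : ℝ} (hδ : 0 < δ) (hδε : δ < ε) (z : H) :
    cfc (gfun δ ε) T z ∈ specSub T ε := by
  have hsa : IsSelfAdjoint T := hpos.isSelfAdjoint
  have hε : 0 < ε := hδ.trans hδε
  refine ⟨‖z‖, fun n => ?_⟩
  have hkey : (T ^ n) * cfc (gfun δ ε) T = cfc (fun t => t ^ n * gfun δ ε t) T := by
    rw [cfc_mul _ _ T (continuous_pow n).continuousOn
      (gfun_continuous δ ε).continuousOn, cfc_pow_id T n hsa]
  have h1 : (T ^ n) (cfc (gfun δ ε) T z) = cfc (fun t => t ^ n * gfun δ ε t) T z := by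
    rw [← hkey]; rfl
  rw [h1]
  have hb : ‖cfc (fun t => t ^ n * gfun δ ε t) T‖ ≤ ε ^ n := by
    apply norm_cfc_le (pow_nonneg hε.le n)
    intro t ht
    have ht0 : 0 ≤ t := spec_nonneg hpos ht
    rcases le_or_gt t ε with h | h
    · rw [Real.norm_eq_abs, abs_of_nonneg (mul_nonneg (pow_nonneg ht0 n) (gfun_nonneg δ ε t))]
      calc t ^ n * gfun δ ε t ≤ ε ^ n * 1 :=
            mul_le_mul (pow_le_pow_left₀ ht0 h n) (gfun_le_one δ ε t) (gfun_nonneg δ ε t)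
              (by positivity)
        _ = ε ^ n := mul_one _
    · rw [gfun_eq_zero hδε h.le, mul_zero, norm_zero]
      positivity
  calc ‖cfc (fun t => t ^ n * gfun δ ε t) T z‖
      ≤ ‖cfc (fun t => t ^ n * gfun δ ε t) T‖ * ‖z‖ := ContinuousLinearMap.le_opNorm _ _
    _ ≤ ε ^ n * ‖z‖ := mul_le_mul_of_nonneg_right hb (norm_nonneg z)
    _ = ‖z‖ * ε ^ n := mul_comm _ _

lemma norm_T_lower (hpos : T.IsPositive) {ε : ℝ} (hε : 0 < ε) {z : H}
    (hz : z ∈ (specSub T ε)ᗮ) : ε * ‖z‖ ≤ ‖T z‖ := by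
  have hsa : IsSelfAdjoint T := hpos.isSelfAdjoint
  have main : ∀ δ : ℝ, 0 < δ → δ < ε → δ * ‖z‖ ≤ ‖T z‖ := by
    intro δ hδ hδε
    have hgz : cfc (gfun δ ε) T z ∈ specSub T ε := cfc_g_mem_specSub hpos hδ hδε z
    have hinner : ⟪cfc (gfun δ ε) T z, z⟫_ℂ = 0 :=
      (Submodule.mem_orthogonal _ z).mp hz _ hgz
    have hgcont : ContinuousOn (fun t => δ ^ 2 * (1 - gfun δ ε t)) (spectrum ℝ T) :=
      (continuousOn_const.mul (continuousOn_const.sub (gfun_continuous δ ε).continuousOn))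
    have hle : cfc (fun t => δ ^ 2 * (1 - gfun δ ε t)) T ≤ cfc (fun t : ℝ => t * t) T := by
      refine cfc_mono ?_ hgcont (continuousOn_id.mul continuousOn_id)
      intro t ht
      have ht0 : 0 ≤ t := spec_nonneg hpos ht
      rcases le_or_gt t δ with h | h
      · rw [gfun_eq_one hδε h]; nlinarith
      · have h1 : gfun δ ε t ≤ 1 := gfun_le_one δ ε t
        have h2 : 0 ≤ gfun δ ε t := gfun_nonneg δ ε t
        nlinarith
    have hposdiff : (cfc (fun t : ℝ => t * t) T
        - cfc (fun t => δ ^ 2 * (1 - gfun δ ε t)) T).IsPositive := by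
      rw [← ContinuousLinearMap.nonneg_iff_isPositive]
      exact sub_nonneg.mpr hle
    have h0 := hposdiff.inner_nonneg_left z
    rw [ContinuousLinearMap.sub_apply, inner_sub_left] at h0
    have hA : cfc (fun t : ℝ => t * t) T = T * T := by
      rw [cfc_mul (fun t : ℝ => t) (fun t : ℝ => t) T continuousOn_id continuousOn_id,
        cfc_id' ℝ T hsa]
    have hB : cfc (fun t => δ ^ 2 * (1 - gfun δ ε t)) T = δ ^ 2 • (1 - cfc (gfun δ ε) T) := by
      rw [cfc_const_mul (δ ^ 2) (fun t => 1 - gfun δ ε t) T (continuousOn_const.sub (gfun_continuous δ ε).continuousOn)]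
      congr 1
      rw [cfc_sub (fun _ : ℝ => (1 : ℝ)) (gfun δ ε) T continuousOn_const
        (gfun_continuous δ ε).continuousOn, cfc_const 1 T hsa, map_one]
    have e1 : ⟪(T * T) z, z⟫_ℂ = ⟪T z, T z⟫_ℂ := by
      rw [ContinuousLinearMap.mul_apply]
      exact sa_inner hsa (T z) z
    have e2 : ⟪(δ ^ 2 • (1 - cfc (gfun δ ε) T)) z, z⟫_ℂ
        = (δ ^ 2 : ℝ) • (⟪z, z⟫_ℂ - ⟪cfc (gfun δ ε) T z, z⟫_ℂ) := by
      rw [ContinuousLinearMap.smul_apply,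
        RCLike.real_smul_eq_coe_smul (K := ℂ) (δ ^ 2) ((1 - cfc (gfun δ ε) T) z),
        inner_smul_left, ContinuousLinearMap.sub_apply, ContinuousLinearMap.one_apply,
        inner_sub_left, RCLike.real_smul_eq_coe_smul (K := ℂ), smul_eq_mul]
      push_cast
      simp [map_pow, Complex.conj_ofReal]
    rw [hA, hB, e1, e2, hinner, sub_zero] at h0
    have h3 : (0 : ℝ) ≤ ‖T z‖ ^ 2 - δ ^ 2 * ‖z‖ ^ 2 := by
      have r1 : RCLike.re ⟪T z, T z⟫_ℂ = ‖T z‖ ^ 2 := inner_self_eq_norm_sq _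
      have r2 : RCLike.re ((δ ^ 2 : ℝ) • ⟪z, z⟫_ℂ) = δ ^ 2 * ‖z‖ ^ 2 := by
        rw [RCLike.smul_re, inner_self_eq_norm_sq]
      have h0 := (RCLike.nonneg_iff.mp h0).1; rw [map_sub, r1, r2] at h0
      linarith
    nlinarith [norm_nonneg (T z), norm_nonneg z, mul_nonneg hδ.le (norm_nonneg z)]
  by_contra hcon
  push_neg at hcon
  have hz0 : 0 < ‖z‖ := by
    rcases (norm_nonneg z).lt_or_eq with h | h
    · exact h
    · exfalso
      have : ‖T z‖ < 0 := by
        have : ε * ‖z‖ = 0 := by rw [← h, mul_zero]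
        linarith
      exact absurd this (not_lt.mpr (norm_nonneg _))
  have hratio : ‖T z‖ / ‖z‖ < ε := (div_lt_iff₀ hz0).mpr (by linarith [hcon])
  obtain ⟨δ, hδ1, hδ2⟩ := exists_between hratio
  have hδpos : 0 < δ := lt_of_le_of_lt (div_nonneg (norm_nonneg _) (norm_nonneg _)) hδ1
  have := main δ hδpos hδ2
  rw [div_lt_iff₀ hz0] at hδ1
  linarith [this]

/-! ### Preimage and projection lemmas -/

instance instOrthHasProj (S : Submodule ℂ H) : Submodule.HasOrthogonalProjection (Sᗮ) :=
  haveI : CompleteSpace ↥(Sᗮ) := (Submodule.isClosed_orthogonal S).completeSpace_coe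
  inferInstance

lemma orth_orth (hsa : IsSelfAdjoint T) {ε : ℝ} (hε : 0 < ε) :
    ((specSub T ε)ᗮ)ᗮ = specSub T ε := by
  haveI : CompleteSpace ↥(specSub T ε) := (specSub_isClosed hsa hε).completeSpace_coe
  exact Submodule.orthogonal_orthogonal _

lemma Tz_eq_zero (hpos : T.IsPositive) {z : H} (h : ⟪T z, z⟫_ℂ = 0) : T z = 0 := by
  have hT0 : (0 : H →L[ℂ] H) ≤ T := (ContinuousLinearMap.nonneg_iff_isPositive T).mpr hpos
  set S := CFC.sqrt T with hSdef
  have hS0 : (0 : H →L[ℂ] H) ≤ S := CFC.sqrt_nonneg T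
  have hSsa : IsSelfAdjoint S :=
    ((ContinuousLinearMap.nonneg_iff_isPositive S).mp hS0).isSelfAdjoint
  have hSS : S * S = T := CFC.sqrt_mul_sqrt_self T hT0
  have hSz : S (S z) = T z := by rw [← hSS]; rfl
  have h1 : ⟪S z, S z⟫_ℂ = 0 := by
    rw [← sa_inner hSsa (S z) z, hSz, h]
  have h2 : S z = 0 := inner_self_eq_zero.mp h1
  rw [← hSz, h2, map_zero]

lemma exists_preimage (hpos : T.IsPositive) {ε : ℝ} (hε : 0 < ε) {w : H}
    (hw : w ∈ (specSub T ε)ᗮ) : ∃ y, y ∈ (specSub T ε)ᗮ ∧ T y = w := by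
  have hsa : IsSelfAdjoint T := hpos.isSelfAdjoint
  haveI : CompleteSpace ↥((specSub T ε)ᗮ) :=
    (Submodule.isClosed_orthogonal _).completeSpace_coe
  have hinv : ∀ k : ↥((specSub T ε)ᗮ), T (k : H) ∈ (specSub T ε)ᗮ := fun k =>
    orth_Tmem hsa k.2
  set G : ↥((specSub T ε)ᗮ) →L[ℂ] ↥((specSub T ε)ᗮ) :=
    (T.comp ((specSub T ε)ᗮ).subtypeL).codRestrict ((specSub T ε)ᗮ) hinv with hGdef
  have hGcoe : ∀ k, (G k : H) = T (k : H) := fun k => rfl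
  have hlow : ∀ k : ↥((specSub T ε)ᗮ), ε * ‖k‖ ≤ ‖G k‖ := by
    intro k
    have h1 : ‖G k‖ = ‖T (k : H)‖ := by rw [← hGcoe k]; rfl
    have h2 : ‖k‖ = ‖(k : H)‖ := rfl
    rw [h1, h2]
    exact norm_T_lower hpos hε k.2
  have hanti : AntilipschitzWith (⟨ε, hε.le⟩ : NNReal)⁻¹ G := by
    apply ContinuousLinearMap.antilipschitz_of_bound
    intro k
    change ‖k‖ ≤ ε⁻¹ * ‖G k‖; rw [inv_mul_eq_div, le_div_iff₀ hε]
    linarith [hlow k]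
  have hclosed : IsClosed (Set.range G) := hanti.isClosed_range G.uniformContinuous
  haveI : CompleteSpace ↥(LinearMap.range (G : ↥((specSub T ε)ᗮ) →ₗ[ℂ] ↥((specSub T ε)ᗮ))) :=
    IsClosed.completeSpace_coe (hs := by rw [LinearMap.coe_range]; exact hclosed)
  have hMbot : (LinearMap.range (G : ↥((specSub T ε)ᗮ) →ₗ[ℂ] ↥((specSub T ε)ᗮ)))ᗮ = ⊥ := by
    rw [Submodule.eq_bot_iff]
    intro w' hw'
    have h1 : ⟪G w', w'⟫_ℂ = 0 :=
      (Submodule.mem_orthogonal _ _).mp hw' (G w') ⟨w', rfl⟩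
    have h2 : ⟪T (w' : H), (w' : H)⟫_ℂ = 0 := by
      rw [← hGcoe w']
      exact h1
    have h3 : T (w' : H) = 0 := Tz_eq_zero hpos h2
    have h4 : ε * ‖(w' : H)‖ ≤ 0 := by
      have := norm_T_lower hpos hε w'.2
      rw [h3, norm_zero] at this
      exact this
    have h5 : (w' : H) = 0 := by
      rw [← norm_eq_zero]
      nlinarith [norm_nonneg (w' : H)]
    exact Subtype.ext h5
  have hM : LinearMap.range (G : ↥((specSub T ε)ᗮ) →ₗ[ℂ] ↥((specSub T ε)ᗮ)) = ⊤ := Submodule.orthogonal_eq_bot_iff.mp hMbot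
  have hmem : (⟨w, hw⟩ : ↥((specSub T ε)ᗮ)) ∈ LinearMap.range (G : ↥((specSub T ε)ᗮ) →ₗ[ℂ] ↥((specSub T ε)ᗮ)) := by rw [hM]; trivial
  obtain ⟨y, hy⟩ := hmem
  refine ⟨(y : H), y.2, ?_⟩
  have := congrArg (Subtype.val) hy
  rw [← hGcoe y] at *
  exact this

lemma norm_proj_mono {K₁ K₂ : Submodule ℂ H} [Submodule.HasOrthogonalProjection K₁]
    [Submodule.HasOrthogonalProjection K₂] (h : K₂ ≤ K₁) (x : H) :
    ‖(Submodule.orthogonalProjectionOnto K₂ x : H)‖ ≤ ‖(Submodule.orthogonalProjectionOnto K₁ x : H)‖ := by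
  have e : Submodule.orthogonalProjectionOnto K₂ ((Submodule.orthogonalProjectionOnto K₁ x : H)) =
      Submodule.orthogonalProjectionOnto K₂ x := Submodule.orthogonalProjectionOnto_starProjection_of_le h x
  rw [← e]
  have h1 : ‖Submodule.orthogonalProjectionOnto K₂ ((Submodule.orthogonalProjectionOnto K₁ x : H))‖
      ≤ ‖(Submodule.orthogonalProjectionOnto K₁ x : H)‖ := by
    calc ‖Submodule.orthogonalProjectionOnto K₂ ((Submodule.orthogonalProjectionOnto K₁ x : H))‖
        ≤ ‖Submodule.orthogonalProjectionOnto K₂‖ * ‖(Submodule.orthogonalProjectionOnto K₁ x : H)‖ :=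
          ContinuousLinearMap.le_opNorm _ _
      _ ≤ 1 * ‖(Submodule.orthogonalProjectionOnto K₁ x : H)‖ :=
          mul_le_mul_of_nonneg_right (Submodule.orthogonalProjectionOnto_norm_le K₂) (norm_nonneg _)
      _ = ‖(Submodule.orthogonalProjectionOnto K₁ x : H)‖ := one_mul _
  exact h1

end IndefAux

open IndefAux

/-- The main construction: if `u = Tx` with `x ∈ (ker T)ᗮ`, then with
`x_ε = E((ε,∞))x`, `y_ε = (∫_{(ε,∞)} λ⁻¹ dE_λ)x_ε` (the unique vector of `E((ε,∞))H` with
`T y_ε = x_ε`) and `z_j(ε) = T_j^* y_ε`, one has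
`T₁z₁(ε) + T₂z₂(ε) − T₃z₃(ε) = Tx_ε → u` as `ε → 0`, and
`0 ≤ ‖z₁(ε)‖² + ‖z₂(ε)‖² − ‖z₃(ε)‖² = ‖x_ε‖²` increases to `‖u‖²_{M(T)} = ‖x‖²` as `ε ↓ 0`. -/
theorem indefinite_range_inclusion {H : Type*} [NormedAddCommGroup H] [InnerProductSpace ℂ H]
    [CompleteSpace H] (T₁ T₂ T₃ : H →L[ℂ] H)
    (hpos : (T₁ ∘L adjoint T₁ + T₂ ∘L adjoint T₂ - T₃ ∘L adjoint T₃).IsPositive)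
    (hcontr : (1 - (T₁ ∘L adjoint T₁ + T₂ ∘L adjoint T₂ - T₃ ∘L adjoint T₃)).IsPositive)
    (T : H →L[ℂ] H)
    (hT : T = CFC.sqrt (T₁ ∘L adjoint T₁ + T₂ ∘L adjoint T₂ - T₃ ∘L adjoint T₃))
    (x : H) (hx : x ∈ (LinearMap.ker (T : H →ₗ[ℂ] H))ᗮ) (u : H) (hu : u = T x) :
    ∃ xe ye : ℝ → H,
      (∀ ε : ℝ, 0 < ε →
        xe ε ∈ spectralGT T ε ∧ x - xe ε ∈ spectralLE T ε ∧
        ye ε ∈ spectralGT T ε ∧ T (ye ε) = xe ε) ∧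
      (∀ ε : ℝ, 0 < ε →
        T₁ (adjoint T₁ (ye ε)) + T₂ (adjoint T₂ (ye ε)) - T₃ (adjoint T₃ (ye ε)) = T (xe ε)) ∧
      Tendsto (fun ε => T (xe ε)) (nhdsWithin 0 (Set.Ioi 0)) (nhds u) ∧
      (∀ ε : ℝ, 0 < ε →
        0 ≤ ‖adjoint T₁ (ye ε)‖ ^ 2 + ‖adjoint T₂ (ye ε)‖ ^ 2 - ‖adjoint T₃ (ye ε)‖ ^ 2 ∧
        ‖adjoint T₁ (ye ε)‖ ^ 2 + ‖adjoint T₂ (ye ε)‖ ^ 2 - ‖adjoint T₃ (ye ε)‖ ^ 2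
          = ‖xe ε‖ ^ 2) ∧
      (∀ ε₁ ε₂ : ℝ, 0 < ε₁ → ε₁ ≤ ε₂ → ‖xe ε₂‖ ≤ ‖xe ε₁‖) ∧
      Tendsto (fun ε => ‖xe ε‖ ^ 2) (nhdsWithin 0 (Set.Ioi 0)) (nhds (‖x‖ ^ 2)) ∧
      sInf {r : ℝ | ∃ y : H, T y = u ∧ r = ‖y‖} = ‖x‖ := by
  classical
  have hA0 : (0 : H →L[ℂ] H) ≤ T₁ ∘L adjoint T₁ + T₂ ∘L adjoint T₂ - T₃ ∘L adjoint T₃ :=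
    (ContinuousLinearMap.nonneg_iff_isPositive _).mpr hpos
  have hTpos : T.IsPositive := by
    rw [← ContinuousLinearMap.nonneg_iff_isPositive, hT]; exact CFC.sqrt_nonneg _
  have hsa : IsSelfAdjoint T := hTpos.isSelfAdjoint
  have hTT : T * T = T₁ ∘L adjoint T₁ + T₂ ∘L adjoint T₂ - T₃ ∘L adjoint T₃ := by
    rw [hT]; exact CFC.sqrt_mul_sqrt_self _ hA0
  set xe : ℝ → H := fun ε => ((Submodule.orthogonalProjectionOnto ((specSub T ε)ᗮ) x :
    ↥((specSub T ε)ᗮ)) : H) with hxedef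
  have hxe_mem : ∀ ε : ℝ, xe ε ∈ (specSub T ε)ᗮ := fun ε => SetLike.coe_mem _
  have hsub_mem : ∀ ε : ℝ, 0 < ε → x - xe ε ∈ specSub T ε := by
    intro ε hε
    have h := Submodule.sub_starProjection_mem_orthogonal (K := (specSub T ε)ᗮ) x
    rwa [orth_orth hsa hε] at h
  have hye0 : ∀ ε : ℝ, 0 < ε → ∃ y, y ∈ (specSub T ε)ᗮ ∧ T y = xe ε := fun ε hε =>
    exists_preimage hTpos hε (hxe_mem ε)
  set ye : ℝ → H := fun ε => if h : 0 < ε then (hye0 ε h).choose else 0 with hyedef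
  have hye_mem : ∀ ε : ℝ, 0 < ε → ye ε ∈ (specSub T ε)ᗮ ∧ T (ye ε) = xe ε := by
    intro ε hε
    simp only [hyedef, dif_pos hε]
    exact (hye0 ε hε).choose_spec
  have hGT : ∀ ε : ℝ, 0 < ε → ∀ w : H, w ∈ (specSub T ε)ᗮ → w ∈ spectralGT T ε := by
    intro ε hε w hw y hy
    refine (Submodule.mem_orthogonal _ w).mp hw y ?_
    rw [← SetLike.mem_coe, coe_specSub hsa hε]
    exact hy
  -- The convergence `xe ε → x`
  have hclos : x ∈ closure ((LinearMap.range (T : H →ₗ[ℂ] H) : Submodule ℂ H) : Set H) := by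
    have hle : (LinearMap.range (T : H →ₗ[ℂ] H))ᗮ ≤ LinearMap.ker (T : H →ₗ[ℂ] H) := by
      intro z hz
      have h1 : ∀ v : H, ⟪T v, z⟫_ℂ = 0 := fun v =>
        (Submodule.mem_orthogonal _ _).mp hz (T v) ⟨v, rfl⟩
      have h2 : ∀ v : H, ⟪v, T z⟫_ℂ = 0 := fun v => by rw [← sa_inner hsa]; exact h1 v
      have h3 : T z = 0 := inner_self_eq_zero.mp (h2 (T z))
      exact LinearMap.mem_ker.mpr h3
    have h2 : (LinearMap.ker (T : H →ₗ[ℂ] H))ᗮ ≤ ((LinearMap.range (T : H →ₗ[ℂ] H))ᗮ)ᗮ := Submodule.orthogonal_le hle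
    have h3 := h2 hx
    rw [Submodule.orthogonal_orthogonal_eq_closure] at h3
    rwa [← Submodule.topologicalClosure_coe]
  have hxtend : Tendsto xe (nhdsWithin 0 (Set.Ioi 0)) (nhds x) := by
    have hv : Tendsto (fun ε => x - xe ε) (nhdsWithin (0:ℝ) (Set.Ioi 0)) (nhds 0) := by
      rw [NormedAddCommGroup.tendsto_nhds_zero]
      intro η hη
      obtain ⟨yw, hyw1, hyw2⟩ := Metric.mem_closure_iff.mp hclos (η / 2) (by positivity)
      obtain ⟨w, rfl⟩ := hyw1
      rw [dist_eq_norm] at hyw2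
      set ε₀ : ℝ := (η / 2) / (‖w‖ + 1) with hε₀def
      have hε₀ : 0 < ε₀ := by positivity
      filter_upwards [Ioo_mem_nhdsGT_of_mem (Set.mem_Ico.mpr ⟨le_refl (0:ℝ), hε₀⟩)]
        with ε hεIoo
      obtain ⟨hεpos, hεlt⟩ := hεIoo
      set v : H := x - xe ε with hvdef
      have hv_in : v ∈ specSub T ε := hsub_mem ε hεpos
      have hvxe : ⟪v, xe ε⟫_ℂ = 0 := (Submodule.mem_orthogonal _ _).mp (hxe_mem ε) v hv_in
      have hTv : ‖T v‖ ≤ ε * ‖v‖ := by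
        have hvLE : v ∈ spectralLE T ε := by
          rw [← SetLike.mem_coe, coe_specSub hsa hεpos] at hv_in
          exact hv_in
        simpa [pow_one] using hvLE 1
      have e1 : (‖v‖ : ℝ) ^ 2 = RCLike.re ⟪v, x⟫_ℂ := by
        have hsplit : ⟪v, x⟫_ℂ = ⟪v, v⟫_ℂ + ⟪v, xe ε⟫_ℂ := by
          rw [← inner_add_right, hvdef, sub_add_cancel]
        rw [hsplit, hvxe, add_zero, inner_self_eq_norm_sq]
      have e2 : ⟪v, x⟫_ℂ = ⟪v, x - T w⟫_ℂ + ⟪v, T w⟫_ℂ := by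
        rw [← inner_add_right, sub_add_cancel]
      have e3 : RCLike.re ⟪v, x - T w⟫_ℂ ≤ ‖v‖ * ‖x - T w‖ :=
        (RCLike.re_le_norm _).trans (norm_inner_le_norm _ _)
      have e4 : RCLike.re ⟪v, T w⟫_ℂ ≤ ε * ‖v‖ * ‖w‖ := by
        rw [← sa_inner hsa v w]
        refine (RCLike.re_le_norm _).trans ((norm_inner_le_norm _ _).trans ?_)
        calc ‖T v‖ * ‖w‖ ≤ (ε * ‖v‖) * ‖w‖ :=
              mul_le_mul_of_nonneg_right hTv (norm_nonneg w)
          _ = ε * ‖v‖ * ‖w‖ := by ring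
      have key : ‖v‖ ^ 2 ≤ ‖v‖ * ‖x - T w‖ + ε * ‖v‖ * ‖w‖ := by
        rw [e1, e2, map_add]
        exact add_le_add e3 e4
      have hw1 : ε * (‖w‖ + 1) < η / 2 := by
        rw [hε₀def] at hεlt
        exact (lt_div_iff₀ (by positivity)).mp hεlt
      rcases eq_or_lt_of_le (norm_nonneg v) with hv0 | hvpos
      · rw [← hv0]; exact hη
      · have hmain : ‖v‖ ≤ ‖x - T w‖ + ε * ‖w‖ := by
          have := key
          nlinarith [hvpos]
        have : ε * ‖w‖ ≤ ε * (‖w‖ + 1) := by nlinarith [hεpos.le]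
        linarith [show ‖x - T w‖ < η / 2 from hyw2]
    have h2 := (tendsto_const_nhds (x := x)).sub hv
    simpa using h2
  refine ⟨xe, ye, ?_, ?_, ?_, ?_, ?_, ?_, ?_⟩
  · -- memberships
    intro ε hε
    refine ⟨hGT ε hε _ (hxe_mem ε), ?_, hGT ε hε _ (hye_mem ε hε).1, (hye_mem ε hε).2⟩
    rw [← coe_specSub hsa hε]
    exact hsub_mem ε hε
  · -- operator identity
    intro ε hε
    have h1 : T₁ (adjoint T₁ (ye ε)) + T₂ (adjoint T₂ (ye ε)) - T₃ (adjoint T₃ (ye ε))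
        = (T₁ ∘L adjoint T₁ + T₂ ∘L adjoint T₂ - T₃ ∘L adjoint T₃) (ye ε) := by
      simp [ContinuousLinearMap.add_apply, ContinuousLinearMap.sub_apply,
        ContinuousLinearMap.comp_apply]
    rw [h1, ← hTT, ContinuousLinearMap.mul_apply, (hye_mem ε hε).2]
  · -- convergence of T (xe ε)
    rw [hu]
    exact (T.continuous.tendsto x).comp hxtend
  · -- norm identities
    intro ε hε
    have hTy : T (ye ε) = xe ε := (hye_mem ε hε).2
    have hj : ∀ Tj : H →L[ℂ] H,
        ‖adjoint Tj (ye ε)‖ ^ 2 = RCLike.re ⟪ye ε, Tj (adjoint Tj (ye ε))⟫_ℂ := by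
      intro Tj
      rw [← inner_self_eq_norm_sq (𝕜 := ℂ) (adjoint Tj (ye ε))]
      congr 1
      exact ContinuousLinearMap.adjoint_inner_left Tj (adjoint Tj (ye ε)) (ye ε)
    have hfinal : ‖adjoint T₁ (ye ε)‖ ^ 2 + ‖adjoint T₂ (ye ε)‖ ^ 2
        - ‖adjoint T₃ (ye ε)‖ ^ 2 = ‖xe ε‖ ^ 2 := by
      rw [hj T₁, hj T₂, hj T₃]
      have hsum : RCLike.re ⟪ye ε, T₁ (adjoint T₁ (ye ε))⟫_ℂ
          + RCLike.re ⟪ye ε, T₂ (adjoint T₂ (ye ε))⟫_ℂ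
          - RCLike.re ⟪ye ε, T₃ (adjoint T₃ (ye ε))⟫_ℂ
          = RCLike.re ⟪ye ε,
              (T₁ ∘L adjoint T₁ + T₂ ∘L adjoint T₂ - T₃ ∘L adjoint T₃) (ye ε)⟫_ℂ := by
        simp [ContinuousLinearMap.add_apply, ContinuousLinearMap.sub_apply,
          ContinuousLinearMap.comp_apply, inner_add_right, inner_sub_right]
      rw [hsum, ← hTT, ContinuousLinearMap.mul_apply, ← sa_inner hsa (ye ε) (T (ye ε)),
        hTy, inner_self_eq_norm_sq]
    exact ⟨by rw [hfinal]; positivity, hfinal⟩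
  · -- monotonicity
    intro ε₁ ε₂ h1 h12
    have hSle : specSub T ε₁ ≤ specSub T ε₂ := by
      rintro z ⟨C, hC⟩
      have hC0 : 0 ≤ C := by
        have h0 := hC 0
        simp only [pow_zero, mul_one] at h0
        exact le_trans (norm_nonneg _) h0
      exact ⟨C, fun n => (hC n).trans
        (mul_le_mul_of_nonneg_left (pow_le_pow_left₀ h1.le h12 n) hC0)⟩
    exact norm_proj_mono (Submodule.orthogonal_le hSle) x
  · -- convergence of norms
    simpa using (hxtend.norm.pow 2)
  · -- minimality
    have hmem : ‖x‖ ∈ {r : ℝ | ∃ y : H, T y = u ∧ r = ‖y‖} := ⟨x, hu.symm, rfl⟩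
    have hlb : ∀ r ∈ {r : ℝ | ∃ y : H, T y = u ∧ r = ‖y‖}, ‖x‖ ≤ r := by
      rintro r ⟨y, hy, rfl⟩
      have hker : y - x ∈ LinearMap.ker (T : H →ₗ[ℂ] H) := by
        rw [LinearMap.mem_ker, map_sub, ContinuousLinearMap.coe_coe, hy, hu, sub_self]
      have horth : ⟪y - x, x⟫_ℂ = 0 := (Submodule.mem_orthogonal _ x).mp hx _ hker
      have horth2 : ⟪x, y - x⟫_ℂ = 0 := inner_eq_zero_symm.mp horth
      have hdecomp : ‖y‖ ^ 2 = ‖x‖ ^ 2 + ‖y - x‖ ^ 2 := by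
        have := norm_add_sq (𝕜 := ℂ) x (y - x)
        rw [add_sub_cancel] at this
        rw [this, horth2]
        simp
      nlinarith [norm_nonneg y, norm_nonneg x, sq_nonneg (‖y - x‖)]
    exact le_antisymm (csInf_le ⟨‖x‖, hlb⟩ hmem) (le_csInf ⟨‖x‖, hmem⟩ hlb)
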